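/- Let O be a discrete valuation ring with maximal ideal m and finite residue field k = O/m, let O₂ = O/m², let κ₀ : O₂ → k be the natural quotient map and κ : GLₙ(O₂) → GLₙ(k) the induced reduction homomorphism. Let s : k → O₂ be a set-theoretic section of κ₀ (κ₀ ∘ s = id) with s(0) = 0 and s(1) = 1, and let 𝔰 : Mₙ(k) → Mₙ(O₂) be its entrywise extension. Let A ∈ Mₙ(k) be a split matrix in Jordan canonical form: A is the block diagonal matrix with blocks A₁, …, A_l, where Aᵢ = aᵢ·I + (block diagonal of principal nilpotent matrices N_{λ_{i1}}, …, N_{λ_{i lᵢ}}) and a₁, …, a_l are pairwise distinct elements of k. Then κ maps the centralizer Z_{GLₙ(O₂)}(𝔰(A)) onto the centralizer Z_{GLₙ(k)}(A): κ( Z_{GLₙ(O₂)}(𝔰(A)) ) = Z_{GLₙ(k)}(A). -/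

import Mathlib

open Matrix

/-- The `s × s` principal nilpotent matrix: `1`s on the superdiagonal, `0` elsewhere. -/
def principalNilpotent (R : Type*) [Zero R] [One R] (s : ℕ) :
    Matrix (Fin s) (Fin s) R :=
  Matrix.of fun i j => if (i : ℕ) + 1 = (j : ℕ) then 1 else 0

/-- Index type for a matrix in Jordan canonical form with eigenvalue blocks of sizes
`lam i j` (block `j` of eigenvalue `i`). -/
abbrev JIdx (l : ℕ) (c : Fin l → ℕ) (lam : (i : Fin l) → Fin (c i) → ℕ) : Type :=
  (i : Fin l) × ((j : Fin (c i)) × Fin (lam i j))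

/-- The reduction map `O/m² → O/m = k`. -/
noncomputable def redRes (O : Type) [CommRing O] [IsLocalRing O] :
    O ⧸ (IsLocalRing.maximalIdeal O ^ 2) →+* IsLocalRing.ResidueField O :=
  Ideal.Quotient.factor (S := IsLocalRing.maximalIdeal O ^ 2) (T := IsLocalRing.maximalIdeal O)
    (Ideal.pow_le_self two_ne_zero)

/-- The reduction homomorphism `κ : GL_ι(O/m²) → GL_ι(k)`. -/
noncomputable def redGL (O : Type) [CommRing O] [IsLocalRing O]
    (ι : Type) [Fintype ι] [DecidableEq ι] :
    GL ι (O ⧸ (IsLocalRing.maximalIdeal O ^ 2)) →* GL ι (IsLocalRing.ResidueField O) :=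
  Matrix.GeneralLinearGroup.map (redRes O)

namespace JordanAux

variable {l : ℕ} {c : Fin l → ℕ} {lam : (i : Fin l) → Fin (c i) → ℕ}

/-- successor index within a Jordan block -/
def jsucc (p : JIdx l c lam) : Option (JIdx l c lam) :=
  if h : (p.2.2 : ℕ) + 1 < lam p.1 p.2.1 then
    some ⟨p.1, p.2.1, ⟨(p.2.2 : ℕ) + 1, h⟩⟩ else none

/-- predecessor index within a Jordan block -/
def jpred (q : JIdx l c lam) : Option (JIdx l c lam) :=
  if _ : 0 < (q.2.2 : ℕ) then
    some ⟨q.1, q.2.1, ⟨(q.2.2 : ℕ) - 1, lt_of_le_of_lt (Nat.sub_le _ _) q.2.2.isLt⟩⟩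
  else none

lemma jsucc_eq_some_iff {p q : JIdx l c lam} :
    jsucc p = some q ↔
      q.1 = p.1 ∧ (q.2.1 : ℕ) = (p.2.1 : ℕ) ∧ (q.2.2 : ℕ) = (p.2.2 : ℕ) + 1 := by
  obtain ⟨pi, pj, pr⟩ := p
  obtain ⟨qi, qj, qr⟩ := q
  unfold jsucc
  dsimp only
  split_ifs with h
  · constructor
    · intro hq
      obtain ⟨rfl, h2⟩ := Sigma.mk.inj_iff.mp (Option.some_injective _ hq)
      obtain ⟨rfl, h3⟩ := Sigma.mk.inj_iff.mp (eq_of_heq h2)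
      obtain rfl := eq_of_heq h3
      exact ⟨rfl, rfl, rfl⟩
    · rintro ⟨rfl, h2, h3⟩
      obtain rfl : qj = pj := Fin.ext h2
      obtain rfl : qr = ⟨(pr : ℕ) + 1, h⟩ := Fin.ext h3
      rfl
  · constructor
    · rintro ⟨⟩
    · rintro ⟨rfl, h2, h3⟩
      obtain rfl : qj = pj := Fin.ext h2
      exact absurd (h3 ▸ qr.isLt) h

lemma jpred_eq_some_iff {p q : JIdx l c lam} :
    jpred q = some p ↔ jsucc p = some q := by
  rw [jsucc_eq_some_iff]
  obtain ⟨qi, qj, qr⟩ := q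
  unfold jpred
  dsimp only
  split_ifs with h
  · constructor
    · intro hq
      obtain rfl := Option.some_injective _ hq
      exact ⟨rfl, rfl, by dsimp; omega⟩
    · rintro ⟨h1, h2, h3⟩
      obtain ⟨pi, pj, pr⟩ := p
      dsimp only at h1 h2 h3
      subst h1
      obtain rfl : pj = qj := Fin.ext h2.symm
      obtain rfl : pr = ⟨(qr : ℕ) - 1, lt_of_le_of_lt (Nat.sub_le _ _) qr.isLt⟩ :=
        Fin.ext (by dsimp; omega)
      rfl
  · constructor
    · rintro ⟨⟩
    · rintro ⟨h1, h2, h3⟩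
      omega

lemma jsucc_fst {p t : JIdx l c lam} (h : jsucc p = some t) : t.1 = p.1 :=
  (jsucc_eq_some_iff.mp h).1

lemma jpred_fst {q t : JIdx l c lam} (h : jpred q = some t) : t.1 = q.1 :=
  ((jsucc_eq_some_iff.mp (jpred_eq_some_iff.mp h)).1).symm

lemma jsucc_measure {p t : JIdx l c lam} (h : jsucc p = some t) :
    lam t.1 t.2.1 - 1 - (t.2.2 : ℕ) < lam p.1 p.2.1 - 1 - (p.2.2 : ℕ) := by
  unfold jsucc at h
  split_ifs at h with h'
  obtain rfl := Option.some_injective _ h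
  dsimp
  omega

lemma jpred_measure {q t : JIdx l c lam} (h : jpred q = some t) :
    (t.2.2 : ℕ) < (q.2.2 : ℕ) := by
  unfold jpred at h
  split_ifs at h with h'
  obtain rfl := Option.some_injective _ h
  dsimp
  omega

lemma jsucc_ne_self {p : JIdx l c lam} : jsucc p ≠ some p := fun h => by
  have := (jsucc_eq_some_iff.mp h).2.2
  omega

/-- The full nilpotent part of the Jordan matrix. -/
def Nmat (R : Type*) [Zero R] [One R] : Matrix (JIdx l c lam) (JIdx l c lam) R :=
  Matrix.blockDiagonal' fun i => Matrix.blockDiagonal' fun j => principalNilpotent R (lam i j)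

lemma Nmat_apply (R : Type*) [Zero R] [One R] (p q : JIdx l c lam) :
    Nmat R p q = if jsucc p = some q then 1 else 0 := by
  obtain ⟨pi, pj, pr⟩ := p
  obtain ⟨qi, qj, qr⟩ := q
  rcases eq_or_ne pi qi with rfl | hi
  · rw [Nmat, Matrix.blockDiagonal'_apply_eq]
    rcases eq_or_ne pj qj with rfl | hj
    · rw [Matrix.blockDiagonal'_apply_eq]
      simp only [principalNilpotent, Matrix.of_apply, jsucc_eq_some_iff]
      by_cases h : (pr : ℕ) + 1 = (qr : ℕ)
      · rw [if_pos h, if_pos ⟨trivial, trivial, h.symm⟩]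
      · rw [if_neg h, if_neg (by rintro ⟨-, -, h3⟩; exact h h3.symm)]
    · rw [Matrix.blockDiagonal'_apply_ne _ _ _ hj, if_neg]
      intro h
      exact hj (Fin.ext (jsucc_eq_some_iff.mp h).2.1.symm)
  · rw [Nmat, Matrix.blockDiagonal'_apply_ne _ _ _ hi, if_neg]
    intro h
    exact hi (jsucc_eq_some_iff.mp h).1.symm

variable {R : Type*} [CommRing R]

lemma mul_Nmat (M : Matrix (JIdx l c lam) (JIdx l c lam) R) (p q : JIdx l c lam) :
    (M * (Nmat R : Matrix (JIdx l c lam) (JIdx l c lam) R)) p q = (jpred q).elim 0 fun t => M p t := by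
  rw [Matrix.mul_apply]
  have h1 : ∀ t, M p t * Nmat R t q = if jpred q = some t then M p t else 0 := by
    intro t
    rw [Nmat_apply]
    simp only [← jpred_eq_some_iff]
    split_ifs <;> simp
  rw [Finset.sum_congr rfl fun t _ => h1 t]
  cases hq : jpred q with
  | none => simp [hq]
  | some t₀ => simp [hq]

lemma Nmat_mul (M : Matrix (JIdx l c lam) (JIdx l c lam) R) (p q : JIdx l c lam) :
    ((Nmat R : Matrix (JIdx l c lam) (JIdx l c lam) R) * M) p q = (jsucc p).elim 0 fun t => M t q := by
  rw [Matrix.mul_apply]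
  have h1 : ∀ t, Nmat R p t * M t q = if jsucc p = some t then M t q else 0 := by
    intro t
    rw [Nmat_apply]
    split_ifs <;> simp
  rw [Finset.sum_congr rfl fun t _ => h1 t]
  cases hp : jsucc p with
  | none => simp [hp]
  | some t₀ => simp [hp]

lemma blockDiagonal'_smul_one {K : Type*} [Semiring K] (a : Fin l → K) :
    (Matrix.blockDiagonal' fun i =>
        (a i • (1 : Matrix ((j : Fin (c i)) × Fin (lam i j))
          ((j : Fin (c i)) × Fin (lam i j)) K))) =
      Matrix.diagonal (fun p : JIdx l c lam => a p.1) := by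
  ext ⟨pi, px⟩ ⟨qi, qx⟩
  rcases eq_or_ne pi qi with rfl | hi
  · rw [Matrix.blockDiagonal'_apply_eq]
    rcases eq_or_ne px qx with rfl | hx
    · simp [Matrix.one_apply]
    · rw [Matrix.diagonal_apply_ne _ (by simpa [Sigma.mk.inj_iff] using hx)]
      simp [Matrix.one_apply, hx]
  · rw [Matrix.blockDiagonal'_apply_ne _ _ _ hi,
      Matrix.diagonal_apply_ne _ (fun h => hi (congrArg Sigma.fst h))]

lemma map_diag_add_Nmat {K : Type*} [CommRing K] (s : K → R) (hs0 : s 0 = 0)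
    (hs1 : s 1 = 1) (d : JIdx l c lam → K) :
    (Matrix.diagonal d + Nmat K).map s =
      Matrix.diagonal (fun p => s (d p)) + Nmat R := by
  ext p q
  simp only [Matrix.map_apply, Matrix.add_apply, Nmat_apply]
  rcases eq_or_ne p q with rfl | hpq
  · rw [Matrix.diagonal_apply_eq, Matrix.diagonal_apply_eq,
      if_neg jsucc_ne_self, if_neg jsucc_ne_self, add_zero, add_zero]
  · rw [Matrix.diagonal_apply_ne _ hpq, Matrix.diagonal_apply_ne _ hpq, zero_add, zero_add]
    split_ifs
    · exact hs1
    · exact hs0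

section Field

variable {K : Type*} [Field K] (a : Fin l → K) (ha : Function.Injective a)
  (g : Matrix (JIdx l c lam) (JIdx l c lam) K)
  (hg : g * (Matrix.diagonal (fun p : JIdx l c lam => a p.1) + Nmat K) =
    (Matrix.diagonal (fun p : JIdx l c lam => a p.1) + Nmat K) * g)

include hg in
lemma key_relation : ∀ p q : JIdx l c lam,
    (a q.1 - a p.1) * g p q =
      (jsucc p).elim 0 (fun t => g t q) - (jpred q).elim 0 (fun t => g p t) := by
  intro p q
  have h := congrFun (congrFun hg p) q
  rw [Matrix.mul_add, Matrix.add_mul, Matrix.add_apply, Matrix.add_apply,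
    Matrix.mul_diagonal, Matrix.diagonal_mul, mul_Nmat, Nmat_mul] at h
  linear_combination h

include ha hg in
lemma cross_zero : ∀ p q : JIdx l c lam, p.1 ≠ q.1 → g p q = 0 := by
  suffices H : ∀ n : ℕ, ∀ p q : JIdx l c lam, p.1 ≠ q.1 →
      (lam p.1 p.2.1 - 1 - (p.2.2 : ℕ)) + (q.2.2 : ℕ) = n → g p q = 0 by
    exact fun p q h => H _ p q h rfl
  intro n
  induction n using Nat.strong_induction_on with
  | _ n IH =>
    intro p q hpq hn
    have hk := key_relation a g hg p q
    have hsucc : (jsucc p).elim 0 (fun t => g t q) = 0 := by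
      cases hs' : jsucc p with
      | none => rfl
      | some t =>
        have h1 := jsucc_fst hs'
        have h2 := jsucc_measure hs'
        exact IH _ (by omega) t q (h1 ▸ hpq) rfl
    have hpred : (jpred q).elim 0 (fun t => g p t) = 0 := by
      cases hq' : jpred q with
      | none => rfl
      | some t =>
        have h1 := jpred_fst hq'
        have h2 := jpred_measure hq'
        exact IH _ (by omega) p t (h1 ▸ hpq) rfl
    rw [hsucc, hpred, sub_zero] at hk
    have hane : a q.1 - a p.1 ≠ 0 :=
      sub_ne_zero.mpr fun e => hpq ((ha e).symm)
    exact (mul_eq_zero.mp hk).resolve_left hane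

include hg in
lemma same_block : ∀ p q : JIdx l c lam, p.1 = q.1 →
    (jpred q).elim 0 (fun t => g p t) = (jsucc p).elim 0 (fun t => g t q) := by
  intro p q h
  have hk := key_relation a g hg p q
  rw [h, sub_self, zero_mul] at hk
  have := sub_eq_zero.mp hk.symm
  exact this.symm

include ha hg in
lemma lift_commutes (s : K → R) (hs0 : s 0 = 0) :
    (g.map s) * (Matrix.diagonal (fun p : JIdx l c lam => s (a p.1)) + Nmat R) =
      (Matrix.diagonal (fun p : JIdx l c lam => s (a p.1)) + Nmat R) * (g.map s) := by
  have opt_elim : ∀ (o : Option (JIdx l c lam)) (f : JIdx l c lam → K),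
      s (o.elim 0 f) = o.elim 0 fun t => s (f t) := by
    rintro (_ | t) f
    · exact hs0
    · rfl
  ext p q
  rw [Matrix.mul_add, Matrix.add_mul, Matrix.add_apply, Matrix.add_apply,
    Matrix.mul_diagonal, Matrix.diagonal_mul, mul_Nmat, Nmat_mul]
  rcases eq_or_ne p.1 q.1 with h | h
  · have h1 : (g.map s) p q * s (a q.1) = s (a p.1) * (g.map s) p q := by
      rw [h, mul_comm]
    rw [h1]
    congr 1
    calc (jpred q).elim 0 (fun t => (g.map s) p t)
        = s ((jpred q).elim 0 fun t => g p t) := (opt_elim _ _).symm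
      _ = s ((jsucc p).elim 0 fun t => g t q) := by rw [same_block a g hg p q h]
      _ = (jsucc p).elim 0 (fun t => (g.map s) t q) := opt_elim _ _
  · have hz : (g.map s) p q = 0 := by
      rw [Matrix.map_apply, cross_zero a ha g hg p q h, hs0]
    have hpred : (jpred q).elim 0 (fun t => (g.map s) p t) = 0 := by
      cases hq' : jpred q with
      | none => rfl
      | some t =>
        have h1 := jpred_fst hq'
        show s (g p t) = 0
        rw [cross_zero a ha g hg p t (h1 ▸ h), hs0]
    have hsucc : (jsucc p).elim 0 (fun t => (g.map s) t q) = 0 := by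
      cases hp' : jsucc p with
      | none => rfl
      | some t =>
        have h1 := jsucc_fst hp'
        show s (g t q) = 0
        rw [cross_zero a ha g hg t q (h1 ▸ h), hs0]
    rw [hz, hpred, hsucc]; simp

end Field

end JordanAux

section UnitsAux

variable (O : Type) [CommRing O] [IsLocalRing O]

lemma sq_zero_of_redRes_eq_zero (z : O ⧸ (IsLocalRing.maximalIdeal O ^ 2))
    (hz : redRes O z = 0) : z * z = 0 := by
  obtain ⟨w, rfl⟩ := Ideal.Quotient.mk_surjective z
  replace hz : Ideal.Quotient.mk (IsLocalRing.maximalIdeal O) w = 0 := hz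
  have hw : w ∈ IsLocalRing.maximalIdeal O := Ideal.Quotient.eq_zero_iff_mem.mp hz
  rw [← _root_.map_mul, Ideal.Quotient.eq_zero_iff_mem, pow_two]
  exact Ideal.mul_mem_mul hw hw

lemma isUnit_of_redRes {x : O ⧸ (IsLocalRing.maximalIdeal O ^ 2)}
    (h : IsUnit (redRes O x)) : IsUnit x := by
  obtain ⟨u, hu⟩ := h
  obtain ⟨y, hy⟩ : ∃ y, redRes O y = (↑u⁻¹ : IsLocalRing.ResidueField O) := by
    obtain ⟨w, hw⟩ := Ideal.Quotient.mk_surjective (↑u⁻¹ : IsLocalRing.ResidueField O)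
    exact ⟨Ideal.Quotient.mk _ w, hw⟩
  have h1 : redRes O (x * y - 1) = 0 := by
    rw [map_sub, _root_.map_mul, _root_.map_one, ← hu, hy]
    simp
  have h3 : IsUnit (x * y) := by
    have e : x * y = 1 + (x * y - 1) := by ring
    rw [e]
    exact IsNilpotent.isUnit_one_add
      ⟨2, by simpa [pow_two] using sq_zero_of_redRes_eq_zero O _ h1⟩

  exact isUnit_of_mul_isUnit_left h3

end UnitsAux

/-- Let `O` be a discrete valuation ring with finite residue field `k`, `O₂ = O/m²`,
`κ₀ : O₂ → k` the quotient map and `κ` the induced map on `GL`.  Let `s : k → O₂` be a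
section of `κ₀` with `s(0) = 0`, `s(1) = 1`, extended entrywise to matrices.  Let `A`
be a split matrix over `k` in Jordan canonical form: block diagonal with blocks
`Aᵢ = aᵢ·I + (block diagonal of principal nilpotent matrices)`, the `aᵢ` pairwise
distinct.  Then `κ` maps the centralizer of `𝔰(A)` in `GL(O₂)` onto the centralizer
of `A` in `GL(k)`. -/
theorem image_centralizer_section_jordan_eq_centralizer
    (O : Type) [CommRing O] [IsDomain O] [IsDiscreteValuationRing O]
    [Finite (IsLocalRing.ResidueField O)]
    (s : IsLocalRing.ResidueField O → O ⧸ (IsLocalRing.maximalIdeal O ^ 2))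
    (hs : ∀ x, redRes O (s x) = x) (hs0 : s 0 = 0) (hs1 : s 1 = 1)
    (l : ℕ) (a : Fin l → IsLocalRing.ResidueField O) (ha : Function.Injective a)
    (c : Fin l → ℕ) (lam : (i : Fin l) → Fin (c i) → ℕ) (hlam : ∀ i j, 1 ≤ lam i j)
    (A : Matrix (JIdx l c lam) (JIdx l c lam) (IsLocalRing.ResidueField O))
    (hA : A = Matrix.blockDiagonal' (fun i =>
      a i • (1 : Matrix ((j : Fin (c i)) × Fin (lam i j)) ((j : Fin (c i)) × Fin (lam i j))
          (IsLocalRing.ResidueField O)) +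
        Matrix.blockDiagonal' (fun j => principalNilpotent (IsLocalRing.ResidueField O)
          (lam i j)))) :
    (redGL O (JIdx l c lam)) ''
        {g : GL (JIdx l c lam) (O ⧸ (IsLocalRing.maximalIdeal O ^ 2)) |
          (↑g : Matrix (JIdx l c lam) (JIdx l c lam) (O ⧸ (IsLocalRing.maximalIdeal O ^ 2))) *
              A.map s =
            A.map s *
              (↑g : Matrix (JIdx l c lam) (JIdx l c lam)
                (O ⧸ (IsLocalRing.maximalIdeal O ^ 2)))} =
      {g : GL (JIdx l c lam) (IsLocalRing.ResidueField O) |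
        (↑g : Matrix (JIdx l c lam) (JIdx l c lam) (IsLocalRing.ResidueField O)) * A =
          A * (↑g : Matrix (JIdx l c lam) (JIdx l c lam) (IsLocalRing.ResidueField O))} := by
  classical
  have hA' : A = Matrix.diagonal (fun p : JIdx l c lam => a p.1) +
      JordanAux.Nmat (IsLocalRing.ResidueField O) := by
    rw [hA]
    refine (Matrix.blockDiagonal'_add _ _).trans ?_
    rw [JordanAux.blockDiagonal'_smul_one]
    rfl
  subst hA'
  have hcomp : ⇑(redRes O) ∘ s = id := funext hs
  have hmap : ((Matrix.diagonal (fun p : JIdx l c lam => a p.1) +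
        JordanAux.Nmat (IsLocalRing.ResidueField O))).map s =
      Matrix.diagonal (fun p : JIdx l c lam => s (a p.1)) +
        JordanAux.Nmat (O ⧸ (IsLocalRing.maximalIdeal O ^ 2)) :=
    JordanAux.map_diag_add_Nmat s hs0 hs1 _
  have hres : (((Matrix.diagonal (fun p : JIdx l c lam => a p.1) +
        JordanAux.Nmat (IsLocalRing.ResidueField O))).map s).map (redRes O) =
      Matrix.diagonal (fun p : JIdx l c lam => a p.1) +
        JordanAux.Nmat (IsLocalRing.ResidueField O) := by
    rw [Matrix.map_map, hcomp, Matrix.map_id]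
  ext x
  simp only [Set.mem_image, Set.mem_setOf_eq]
  constructor
  · rintro ⟨G, hG, rfl⟩
    have hval : ((redGL O (JIdx l c lam)) G).val = G.val.map (redRes O) := rfl
    rw [hval, ← hres, ← Matrix.map_mul, ← Matrix.map_mul, hG]
  · intro hx
    have hMred : ((x.val).map s).map (redRes O) = x.val := by
      rw [Matrix.map_map, hcomp, Matrix.map_id]
    have hdet : IsUnit ((x.val).map s).det := by
      apply isUnit_of_redRes
      have h1 : redRes O ((x.val).map s).det = (x.val).det := by
        rw [RingHom.map_det, RingHom.mapMatrix_apply, hMred]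
      rw [h1]
      exact Matrix.isUnits_det_units x
    have hunit : IsUnit ((x.val).map s) := (Matrix.isUnit_iff_isUnit_det _).mpr hdet
    refine ⟨hunit.unit, ?_, ?_⟩
    · show (hunit.unit).val * _ = _ * (hunit.unit).val
      rw [IsUnit.unit_spec, hmap]
      exact JordanAux.lift_commutes a ha x.val hx s hs0
    · apply Units.ext
      show (hunit.unit.val).map (redRes O) = x.val
      rw [IsUnit.unit_spec]
      exact hMred
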